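/- Let γ ∈ [1/2, 1), let T be a finite set, let R₁, R₂ : T → ℝ, and define for ξ ∈ T^ℕ the returns G_i(ξ) = ∑_{j=0}^∞ γ^j · R_i(ξ_j) for i = 1,2. Suppose that for all ξ, ξ' ∈ T^ℕ, G₁(ξ) ≤ G₁(ξ') if and only if G₂(ξ) ≤ G₂(ξ'). Then there exist a ∈ ℝ and b > 0 such that G₁(ξ) = b · G₂(ξ) + a for all ξ ∈ T^ℕ, provided neither G₁ nor G₂ is constant; if either is constant then both are, and the conclusion holds with b = 1. -/

import Mathlib

open Filter Finset

private lemma geom_mul_const (γ : ℝ) (h0 : 0 ≤ γ) (h2 : γ < 1) (c : ℝ) :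
    ∑' j : ℕ, γ^j * c = c / (1-γ) := by
  rw [tsum_mul_right, tsum_geometric_of_lt_one h0 h2, div_eq_mul_inv, mul_comm]

private lemma summable_geom_bdd (γ : ℝ) (h0 : 0 ≤ γ) (h2 : γ < 1) (c : ℕ → ℝ) (C : ℝ)
    (hC : ∀ j, |c j| ≤ C) : Summable (fun j : ℕ => γ^j * c j) := by
  apply Summable.of_norm_bounded (g := fun j => γ^j * C)
    ((summable_geometric_of_lt_one h0 h2).mul_right C)
  intro j
  rw [Real.norm_eq_abs, abs_mul, abs_pow, abs_of_nonneg h0]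
  exact mul_le_mul_of_nonneg_left (hC j) (pow_nonneg h0 j)

private lemma tsum_le_geom (γ : ℝ) (h0 : 0 ≤ γ) (h2 : γ < 1) (c : ℕ → ℝ) (C : ℝ)
    (hC : ∀ j, |c j| ≤ C) (M : ℝ) (hM : ∀ j, c j ≤ M) :
    ∑' j : ℕ, γ^j * c j ≤ M / (1-γ) := by
  rw [← geom_mul_const γ h0 h2 M]
  exact Summable.tsum_le_tsum (fun j => mul_le_mul_of_nonneg_left (hM j) (pow_nonneg h0 j))
    (summable_geom_bdd γ h0 h2 c C hC) ((summable_geometric_of_lt_one h0 h2).mul_right M)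

private lemma geom_le_tsum (γ : ℝ) (h0 : 0 ≤ γ) (h2 : γ < 1) (c : ℕ → ℝ) (C : ℝ)
    (hC : ∀ j, |c j| ≤ C) (m : ℝ) (hm : ∀ j, m ≤ c j) :
    m / (1-γ) ≤ ∑' j : ℕ, γ^j * c j := by
  rw [← geom_mul_const γ h0 h2 m]
  exact Summable.tsum_le_tsum (fun j => mul_le_mul_of_nonneg_left (hm j) (pow_nonneg h0 j))
    ((summable_geometric_of_lt_one h0 h2).mul_right m) (summable_geom_bdd γ h0 h2 c C hC)

private lemma abs_le_max_abs (m M x : ℝ) (h1 : m ≤ x) (h2 : x ≤ M) : |x| ≤ max |m| |M| := by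
  rcases abs_cases m with ⟨hm, _⟩ | ⟨hm, _⟩ <;> rcases abs_cases M with ⟨hM, _⟩ | ⟨hM, _⟩ <;>
    rw [abs_le] <;> constructor <;>
    [skip; skip; skip; skip; skip; skip; skip; skip] <;>
    simp only [le_max_iff, neg_le, min_le_iff] at * <;> first
      | (left; linarith) | (right; linarith)

private lemma attain (γ : ℝ) (h1 : 1/2 ≤ γ) (h2 : γ < 1) (m M : ℝ) (hmM : m ≤ M)
    (y : ℝ) (hy1 : m/(1-γ) ≤ y) (hy2 : y ≤ M/(1-γ)) :
    ∃ s : ℕ → Bool, (∑' j : ℕ, γ^j * (if s j then M else m)) = y := by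
  classical
  have hγ0 : (0:ℝ) < γ := by linarith
  have h1γ : (0:ℝ) < 1 - γ := by linarith
  set a := m/(1-γ) with ha
  set b := M/(1-γ) with hb
  have ham : m + γ * a = a := by rw [ha]; field_simp; ring
  have hbM : M + γ * b = b := by rw [hb]; field_simp; ring
  have hab : a ≤ b := by rw [ha, hb]; gcongr
  have hkey : M + γ * a ≤ m + γ * b := by nlinarith [mul_le_mul_of_nonneg_left (show 1 - γ ≤ γ by linarith) (sub_nonneg.2 hab)]
  set step : ℝ → ℝ := fun x => if M + γ*a ≤ x then (x - M)/γ else (x - m)/γ with hstep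
  set v : ℕ → ℝ := fun n => step^[n] y with hv
  have hv0 : v 0 = y := rfl
  have hvs : ∀ n, v (n+1) = step (v n) := fun n => Function.iterate_succ_apply' step n y
  have hinv : ∀ n, a ≤ v n ∧ v n ≤ b := by
    intro n; induction n with
    | zero => exact ⟨hy1, hy2⟩
    | succ n ih =>
      rw [hvs, hstep]
      simp only
      split_ifs with h
      · refine ⟨le_div_iff₀ hγ0 |>.2 (by nlinarith), div_le_iff₀ hγ0 |>.2 (by nlinarith [ih.2])⟩
      · push_neg at h
        refine ⟨le_div_iff₀ hγ0 |>.2 (by nlinarith [ih.1]), div_le_iff₀ hγ0 |>.2 (by nlinarith [ih.2])⟩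
  set s : ℕ → Bool := fun n => if M + γ*a ≤ v n then true else false with hs
  have hsd : ∀ n, (if s n then M else m) = (if M + γ*a ≤ v n then M else m) := by
    intro n; rw [hs]; by_cases h : M + γ*a ≤ v n <;> simp [h]
  have hd : ∀ n, v n = (if s n then M else m) + γ * v (n+1) := by
    intro n
    rw [hsd, hvs, hstep]
    simp only
    split_ifs with h <;>
      · rw [mul_comm, div_mul_cancel₀ _ hγ0.ne']
        ring
  have hpart : ∀ n, y = (∑ j ∈ Finset.range n, γ^j * (if s j then M else m)) + γ^n * v n := by
    intro n; induction n with
    | zero => simp [hv0]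
    | succ n ih =>
      rw [Finset.sum_range_succ, ih, hd n]; ring
  refine ⟨s, ?_⟩
  have hC : ∀ j, |(if s j then M else m)| ≤ max |m| |M| := by
    intro j; split_ifs
    · exact le_max_right _ _
    · exact le_max_left _ _
  have hsum : Summable (fun j : ℕ => γ^j * (if s j then M else m)) :=
    summable_geom_bdd γ hγ0.le h2 _ _ hC
  have htend0 : Tendsto (fun n : ℕ => γ^n * v n) atTop (nhds 0) := by
    apply squeeze_zero_norm (a := fun n => γ^n * max |a| |b|)
    · intro n
      rw [Real.norm_eq_abs, abs_mul, abs_pow, abs_of_nonneg hγ0.le]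
      exact mul_le_mul_of_nonneg_left (abs_le_max_abs a b _ (hinv n).1 (hinv n).2) (pow_nonneg hγ0.le n)
    · simpa using (tendsto_pow_atTop_nhds_zero_of_lt_one hγ0.le h2).mul_const (max |a| |b|)
  have htend : Tendsto (fun n => ∑ j ∈ Finset.range n, γ^j * (if s j then M else m)) atTop (nhds y) := by
    have heq : (fun n => ∑ j ∈ Finset.range n, γ^j * (if s j then M else m)) = fun n => y - γ^n * v n := by
      funext n; have := hpart n; linarith
    rw [heq]
    simpa using tendsto_const_nhds.sub htend0
  exact tendsto_nhds_unique hsum.hasSum.tendsto_sum_nat htend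



/-- Theorem 2: if the discounted returns G₁, G₂ of two Markovian rewards induce the same
order on all trajectories and γ ≥ 1/2, then G₁ is a positive affine transformation of G₂
(when neither is constant); and if either is constant, both are and G₁ = 1·G₂ + a. -/
theorem stmt_3 (γ : ℝ) (hγ : 1/2 ≤ γ) (hγ1 : γ < 1)
    (T : Type*) [Fintype T]
    (R₁ R₂ : T → ℝ) (G₁ G₂ : (ℕ → T) → ℝ)
    (hG₁ : ∀ ξ, G₁ ξ = ∑' j : ℕ, γ^j * R₁ (ξ j))
    (hG₂ : ∀ ξ, G₂ ξ = ∑' j : ℕ, γ^j * R₂ (ξ j))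
    (hord : ∀ ξ ξ' : ℕ → T, G₁ ξ ≤ G₁ ξ' ↔ G₂ ξ ≤ G₂ ξ') :
    ((¬ (∀ ξ ξ' : ℕ → T, G₁ ξ = G₁ ξ') ∧ ¬ (∀ ξ ξ' : ℕ → T, G₂ ξ = G₂ ξ')) →
      ∃ a b : ℝ, 0 < b ∧ ∀ ξ, G₁ ξ = b * G₂ ξ + a) ∧
    (((∀ ξ ξ' : ℕ → T, G₁ ξ = G₁ ξ') ∨ (∀ ξ ξ' : ℕ → T, G₂ ξ = G₂ ξ')) →
      (∀ ξ ξ' : ℕ → T, G₁ ξ = G₁ ξ') ∧ (∀ ξ ξ' : ℕ → T, G₂ ξ = G₂ ξ') ∧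
      ∃ a : ℝ, ∀ ξ, G₁ ξ = 1 * G₂ ξ + a) := by
  classical
  have hγ0 : (0:ℝ) ≤ γ := by linarith
  have h1γ : (0:ℝ) < 1 - γ := by linarith
  -- equal G₂ implies equal G₁ and vice versa
  have heq12 : ∀ ξ ξ', G₂ ξ = G₂ ξ' → G₁ ξ = G₁ ξ' := fun ξ ξ' h =>
    le_antisymm ((hord ξ ξ').2 h.le) ((hord ξ' ξ).2 h.ge)
  have heq21 : ∀ ξ ξ', G₁ ξ = G₁ ξ' → G₂ ξ = G₂ ξ' := fun ξ ξ' h =>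
    le_antisymm ((hord ξ ξ').1 h.le) ((hord ξ' ξ).1 h.ge)
  -- constant-case handling
  have hconst : ((∀ ξ ξ' : ℕ → T, G₁ ξ = G₁ ξ') ∨ (∀ ξ ξ' : ℕ → T, G₂ ξ = G₂ ξ')) →
      (∀ ξ ξ' : ℕ → T, G₁ ξ = G₁ ξ') ∧ (∀ ξ ξ' : ℕ → T, G₂ ξ = G₂ ξ') ∧
      ∃ a : ℝ, ∀ ξ, G₁ ξ = 1 * G₂ ξ + a := by
    intro h
    have hboth : (∀ ξ ξ' : ℕ → T, G₁ ξ = G₁ ξ') ∧ (∀ ξ ξ' : ℕ → T, G₂ ξ = G₂ ξ') := by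
      rcases h with h | h
      · exact ⟨h, fun ξ ξ' => heq21 ξ ξ' (h ξ ξ')⟩
      · exact ⟨fun ξ ξ' => heq12 ξ ξ' (h ξ ξ'), h⟩
    refine ⟨hboth.1, hboth.2, ?_⟩
    rcases isEmpty_or_nonempty T with hT | hT
    · exact ⟨0, fun ξ => (IsEmpty.false (ξ 0)).elim⟩
    · obtain ⟨ξ₀⟩ : Nonempty (ℕ → T) := ⟨fun _ => Classical.arbitrary T⟩
      exact ⟨G₁ ξ₀ - G₂ ξ₀, fun ξ => by
        rw [hboth.1 ξ ξ₀, hboth.2 ξ ξ₀]; ring⟩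
  refine ⟨?_, hconst⟩
  intro ⟨hn1, hn2⟩
  rcases isEmpty_or_nonempty T with hT | hT
  · exact absurd (fun ξ _ => (IsEmpty.false (ξ 0)).elim) hn1
  -- extremal states for R₂
  obtain ⟨u, hu⟩ := Finite.exists_max R₂
  obtain ⟨l, hl⟩ := Finite.exists_min R₂
  -- value of G on constant trajectories
  have hGc₁ : ∀ t : T, G₁ (fun _ => t) = R₁ t / (1-γ) := fun t => by
    rw [hG₁]; exact geom_mul_const γ hγ0 hγ1 _
  have hGc₂ : ∀ t : T, G₂ (fun _ => t) = R₂ t / (1-γ) := fun t => by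
    rw [hG₂]; exact geom_mul_const γ hγ0 hγ1 _
  -- order transfer on states
  have htrans : ∀ t t' : T, R₂ t ≤ R₂ t' → R₁ t ≤ R₁ t' := by
    intro t t' h
    have h2 : G₂ (fun _ => t) ≤ G₂ (fun _ => t') := by
      rw [hGc₂, hGc₂]; gcongr
    have h1 := (hord (fun _ => t) (fun _ => t')).2 h2
    rw [hGc₁, hGc₁] at h1
    exact (div_le_div_iff_of_pos_right h1γ).mp h1
  -- bounds on rewards: C for absolute bound
  set C₂ := max |R₂ l| |R₂ u| with hC₂
  have habs₂ : ∀ t : T, |R₂ t| ≤ C₂ := fun t => abs_le_max_abs _ _ _ (hl t) (hu t)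
  set C₁ := max |R₁ l| |R₁ u| with hC₁
  have habs₁ : ∀ t : T, |R₁ t| ≤ C₁ := fun t => abs_le_max_abs _ _ _ (htrans l t (hl t)) (htrans t u (hu t))
  -- R₂ nonconstant
  have hlu₂ : R₂ l < R₂ u := by
    rcases lt_or_eq_of_le (le_trans (hl u) (le_refl _)) with h | h
    · exact h
    · exfalso; apply hn2
      intro ξ ξ'
      have hc : ∀ t : T, R₂ t = R₂ l := fun t => le_antisymm (h ▸ hu t) (hl t)
      rw [hG₂, hG₂]
      exact tsum_congr (fun j => by rw [hc (ξ j), hc (ξ' j)]) 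
  have hlu₁ : R₁ l < R₁ u := by
    rcases lt_or_eq_of_le (htrans l u (le_trans (hl u) (le_refl _))) with h | h
    · exact h
    · exfalso; apply hn1
      intro ξ ξ'
      have hc : ∀ t : T, R₁ t = R₁ l := fun t =>
        le_antisymm (h ▸ htrans t u (hu t)) (htrans l t (hl t))
      rw [hG₁, hG₁]
      exact tsum_congr (fun j => by rw [hc (ξ j), hc (ξ' j)])
  -- affine coefficients
  set β := (R₁ u - R₁ l) / (R₂ u - R₂ l) with hβ
  have hβpos : 0 < β := div_pos (by linarith) (by linarith)
  set α := R₁ l - β * R₂ l with hα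
  have haffl : R₁ l = α + β * R₂ l := by rw [hα]; ring
  have haffu : R₁ u = α + β * R₂ u := by
    have hne : R₂ u - R₂ l ≠ 0 := sub_ne_zero.2 hlu₂.ne'
    rw [hα, hβ]
    field_simp
    ring
  refine ⟨α / (1-γ), β, hβpos, ?_⟩
  intro ξ
  -- G₂ ξ lies in the interval
  have hyb : G₂ ξ ≤ R₂ u / (1-γ) := by
    rw [hG₂]; exact tsum_le_geom γ hγ0 hγ1 _ C₂ (fun j => habs₂ _) _ (fun j => hu _)
  have hya : R₂ l / (1-γ) ≤ G₂ ξ := by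
    rw [hG₂]; exact geom_le_tsum γ hγ0 hγ1 _ C₂ (fun j => habs₂ _) _ (fun j => hl _)
  obtain ⟨s, hsy⟩ := attain γ hγ hγ1 (R₂ l) (R₂ u) hlu₂.le (G₂ ξ) hya hyb
  set ξ' : ℕ → T := fun n => if s n then u else l with hξ'
  have hR2' : ∀ j, R₂ (ξ' j) = (if s j then R₂ u else R₂ l) := by
    intro j; rw [hξ']; by_cases h : s j <;> simp [h]
  have hG2' : G₂ ξ' = G₂ ξ := by
    rw [hG₂, ← hsy]
    exact tsum_congr (fun j => by rw [hR2' j])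
  have hG1' : G₁ ξ = G₁ ξ' := heq12 ξ ξ' hG2'.symm
  -- compute G₁ ξ'
  have hR1' : ∀ j, R₁ (ξ' j) = α + β * R₂ (ξ' j) := by
    intro j; rw [hξ']; by_cases h : s j <;> simp [h, ← haffu, ← haffl]
  have hsum2 : Summable (fun j : ℕ => γ^j * R₂ (ξ' j)) :=
    summable_geom_bdd γ hγ0 hγ1 _ C₂ (fun j => habs₂ _)
  have hcalc : G₁ ξ' = β * G₂ ξ' + α / (1-γ) := by
    rw [hG₁, hG₂]
    have : ∀ j : ℕ, γ^j * R₁ (ξ' j) = γ^j * α + β * (γ^j * R₂ (ξ' j)) := by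
      intro j; rw [hR1' j]; ring
    rw [tsum_congr this, Summable.tsum_add ((summable_geometric_of_lt_one hγ0 hγ1).mul_right α)
      (hsum2.mul_left β), tsum_mul_left, geom_mul_const γ hγ0 hγ1]
    ring
  rw [hG1', hcalc, hG2']
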